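/- For every automorphism T of the Möbius–Kantor graph MK: if L(T) = 4 then T has order 2 or 3; if L(T) = 2 then T has order 2; and if L(T) = 0 then T is fixed-point free in the sense that T fixes no vertex and maps no edge to itself (neither pointwise nor with its endpoints swapped). -/

import Mathlib

/-- The underlying relation of the Möbius–Kantor graph `GP(8,3)`. -/
def mkRel (v w : ZMod 8 × Fin 2) : Bool :=
  (v.2 == 0 && w.2 == 0 && (w.1 == v.1 + 1 || v.1 == w.1 + 1)) ||
  ((v.2 == 0 && w.2 == 1 || v.2 == 1 && w.2 == 0) && v.1 == w.1) ||
  (v.2 == 1 && w.2 == 1 && (w.1 == v.1 + 3 || v.1 == w.1 + 3))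

/-- The Möbius–Kantor graph, i.e. the generalized Petersen graph `GP(8,3)`. -/
def MK : SimpleGraph (ZMod 8 × Fin 2) where
  Adj v w := mkRel v w = true
  symm := ⟨by intro v w; revert v w; decide⟩
  loopless := ⟨by intro v; revert v; decide⟩

instance : DecidableRel MK.Adj := fun v w => inferInstanceAs (Decidable (mkRel v w = true))

noncomputable instance : Fintype (MK ≃g MK) :=
  Fintype.ofInjective (fun T => T.toEquiv) (fun T S h => by
    cases T; cases S; simpa using h)

/-- The Lefschetz number of a graph automorphism `T` of `MK`: the number of fixed
vertices, minus the number of edges fixed pointwise, plus the number of edges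
mapped to themselves with their endpoints swapped. -/
noncomputable def lefschetz (T : MK ≃g MK) : ℤ :=
  ((Finset.univ.filter fun v : ZMod 8 × Fin 2 => T v = v).card : ℤ)
    - ((MK.edgeFinset.filter fun e => ∀ v ∈ e, T v = v).card : ℤ)
    + ((MK.edgeFinset.filter fun e => Sym2.map T e = e ∧ ¬ ∀ v ∈ e, T v = v).card : ℤ)

/-! ### Auxiliary machinery -/

set_option maxRecDepth 80000
set_option maxHeartbeats 4000000

abbrev MKV := ZMod 8 × Fin 2

set_option maxHeartbeats 1000000 in
def tbls : List (List (ZMod 8 × Fin 2) × List (ZMod 8 × Fin 2)) := [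
  ([(0, 0), (0, 1), (1, 0), (1, 1), (2, 0), (2, 1), (3, 0), (3, 1), (4, 0), (4, 1), (5, 0), (5, 1), (6, 0), (6, 1), (7, 0), (7, 1)], [(0, 0), (0, 1), (1, 0), (1, 1), (2, 0), (2, 1), (3, 0), (3, 1), (4, 0), (4, 1), (5, 0), (5, 1), (6, 0), (6, 1), (7, 0), (7, 1)]),
  ([(0, 0), (0, 1), (7, 0), (7, 1), (6, 0), (6, 1), (5, 0), (5, 1), (4, 0), (4, 1), (3, 0), (3, 1), (2, 0), (2, 1), (1, 0), (1, 1)], [(0, 0), (0, 1), (7, 0), (7, 1), (6, 0), (6, 1), (5, 0), (5, 1), (4, 0), (4, 1), (3, 0), (3, 1), (2, 0), (2, 1), (1, 0), (1, 1)]),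
  ([(0, 0), (1, 0), (0, 1), (5, 1), (3, 1), (6, 1), (3, 0), (2, 0), (4, 0), (5, 0), (4, 1), (1, 1), (7, 1), (2, 1), (7, 0), (6, 0)], [(0, 0), (1, 0), (0, 1), (5, 1), (3, 1), (6, 1), (3, 0), (2, 0), (4, 0), (5, 0), (4, 1), (1, 1), (7, 1), (2, 1), (7, 0), (6, 0)]),
  ([(0, 0), (1, 0), (7, 0), (6, 0), (7, 1), (2, 1), (4, 1), (1, 1), (4, 0), (5, 0), (3, 0), (2, 0), (3, 1), (6, 1), (0, 1), (5, 1)], [(0, 0), (7, 0), (0, 1), (3, 1), (5, 1), (2, 1), (5, 0), (6, 0), (4, 0), (3, 0), (4, 1), (7, 1), (1, 1), (6, 1), (1, 0), (2, 0)]),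
  ([(0, 0), (7, 0), (0, 1), (3, 1), (5, 1), (2, 1), (5, 0), (6, 0), (4, 0), (3, 0), (4, 1), (7, 1), (1, 1), (6, 1), (1, 0), (2, 0)], [(0, 0), (1, 0), (7, 0), (6, 0), (7, 1), (2, 1), (4, 1), (1, 1), (4, 0), (5, 0), (3, 0), (2, 0), (3, 1), (6, 1), (0, 1), (5, 1)]),
  ([(0, 0), (7, 0), (1, 0), (2, 0), (1, 1), (6, 1), (4, 1), (7, 1), (4, 0), (3, 0), (5, 0), (6, 0), (5, 1), (2, 1), (0, 1), (3, 1)], [(0, 0), (7, 0), (1, 0), (2, 0), (1, 1), (6, 1), (4, 1), (7, 1), (4, 0), (3, 0), (5, 0), (6, 0), (5, 1), (2, 1), (0, 1), (3, 1)]),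
  ([(0, 1), (0, 0), (3, 1), (3, 0), (6, 1), (6, 0), (1, 1), (1, 0), (4, 1), (4, 0), (7, 1), (7, 0), (2, 1), (2, 0), (5, 1), (5, 0)], [(0, 1), (0, 0), (3, 1), (3, 0), (6, 1), (6, 0), (1, 1), (1, 0), (4, 1), (4, 0), (7, 1), (7, 0), (2, 1), (2, 0), (5, 1), (5, 0)]),
  ([(0, 1), (0, 0), (5, 1), (5, 0), (2, 1), (2, 0), (7, 1), (7, 0), (4, 1), (4, 0), (1, 1), (1, 0), (6, 1), (6, 0), (3, 1), (3, 0)], [(0, 1), (0, 0), (5, 1), (5, 0), (2, 1), (2, 0), (7, 1), (7, 0), (4, 1), (4, 0), (1, 1), (1, 0), (6, 1), (6, 0), (3, 1), (3, 0)]),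
  ([(0, 1), (3, 1), (0, 0), (7, 0), (1, 0), (2, 0), (1, 1), (6, 1), (4, 1), (7, 1), (4, 0), (3, 0), (5, 0), (6, 0), (5, 1), (2, 1)], [(1, 0), (0, 0), (2, 0), (3, 0), (2, 1), (7, 1), (5, 1), (0, 1), (5, 0), (4, 0), (6, 0), (7, 0), (6, 1), (3, 1), (1, 1), (4, 1)]),
  ([(0, 1), (3, 1), (5, 1), (2, 1), (5, 0), (6, 0), (4, 0), (3, 0), (4, 1), (7, 1), (1, 1), (6, 1), (1, 0), (2, 0), (0, 0), (7, 0)], [(7, 0), (0, 0), (6, 0), (5, 0), (6, 1), (1, 1), (3, 1), (0, 1), (3, 0), (4, 0), (2, 0), (1, 0), (2, 1), (5, 1), (7, 1), (4, 1)]),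
  ([(0, 1), (5, 1), (0, 0), (1, 0), (7, 0), (6, 0), (7, 1), (2, 1), (4, 1), (1, 1), (4, 0), (5, 0), (3, 0), (2, 0), (3, 1), (6, 1)], [(1, 0), (0, 0), (1, 1), (4, 1), (6, 1), (3, 1), (6, 0), (7, 0), (5, 0), (4, 0), (5, 1), (0, 1), (2, 1), (7, 1), (2, 0), (3, 0)]),
  ([(0, 1), (5, 1), (3, 1), (6, 1), (3, 0), (2, 0), (4, 0), (5, 0), (4, 1), (1, 1), (7, 1), (2, 1), (7, 0), (6, 0), (0, 0), (1, 0)], [(7, 0), (0, 0), (7, 1), (4, 1), (2, 1), (5, 1), (2, 0), (1, 0), (3, 0), (4, 0), (3, 1), (0, 1), (6, 1), (1, 1), (6, 0), (5, 0)]),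
  ([(1, 0), (0, 0), (1, 1), (4, 1), (6, 1), (3, 1), (6, 0), (7, 0), (5, 0), (4, 0), (5, 1), (0, 1), (2, 1), (7, 1), (2, 0), (3, 0)], [(0, 1), (5, 1), (0, 0), (1, 0), (7, 0), (6, 0), (7, 1), (2, 1), (4, 1), (1, 1), (4, 0), (5, 0), (3, 0), (2, 0), (3, 1), (6, 1)]),
  ([(1, 0), (0, 0), (2, 0), (3, 0), (2, 1), (7, 1), (5, 1), (0, 1), (5, 0), (4, 0), (6, 0), (7, 0), (6, 1), (3, 1), (1, 1), (4, 1)], [(0, 1), (3, 1), (0, 0), (7, 0), (1, 0), (2, 0), (1, 1), (6, 1), (4, 1), (7, 1), (4, 0), (3, 0), (5, 0), (6, 0), (5, 1), (2, 1)]),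
  ([(1, 0), (1, 1), (0, 0), (0, 1), (7, 0), (7, 1), (6, 0), (6, 1), (5, 0), (5, 1), (4, 0), (4, 1), (3, 0), (3, 1), (2, 0), (2, 1)], [(1, 0), (1, 1), (0, 0), (0, 1), (7, 0), (7, 1), (6, 0), (6, 1), (5, 0), (5, 1), (4, 0), (4, 1), (3, 0), (3, 1), (2, 0), (2, 1)]),
  ([(1, 0), (1, 1), (2, 0), (2, 1), (3, 0), (3, 1), (4, 0), (4, 1), (5, 0), (5, 1), (6, 0), (6, 1), (7, 0), (7, 1), (0, 0), (0, 1)], [(7, 0), (7, 1), (0, 0), (0, 1), (1, 0), (1, 1), (2, 0), (2, 1), (3, 0), (3, 1), (4, 0), (4, 1), (5, 0), (5, 1), (6, 0), (6, 1)]),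
  ([(1, 0), (2, 0), (0, 0), (7, 0), (0, 1), (3, 1), (5, 1), (2, 1), (5, 0), (6, 0), (4, 0), (3, 0), (4, 1), (7, 1), (1, 1), (6, 1)], [(1, 0), (2, 0), (0, 0), (7, 0), (0, 1), (3, 1), (5, 1), (2, 1), (5, 0), (6, 0), (4, 0), (3, 0), (4, 1), (7, 1), (1, 1), (6, 1)]),
  ([(1, 0), (2, 0), (1, 1), (6, 1), (4, 1), (7, 1), (4, 0), (3, 0), (5, 0), (6, 0), (5, 1), (2, 1), (0, 1), (3, 1), (0, 0), (7, 0)], [(7, 0), (6, 0), (0, 0), (1, 0), (0, 1), (5, 1), (3, 1), (6, 1), (3, 0), (2, 0), (4, 0), (5, 0), (4, 1), (1, 1), (7, 1), (2, 1)]),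
  ([(1, 1), (1, 0), (4, 1), (4, 0), (7, 1), (7, 0), (2, 1), (2, 0), (5, 1), (5, 0), (0, 1), (0, 0), (3, 1), (3, 0), (6, 1), (6, 0)], [(5, 1), (5, 0), (0, 1), (0, 0), (3, 1), (3, 0), (6, 1), (6, 0), (1, 1), (1, 0), (4, 1), (4, 0), (7, 1), (7, 0), (2, 1), (2, 0)]),
  ([(1, 1), (1, 0), (6, 1), (6, 0), (3, 1), (3, 0), (0, 1), (0, 0), (5, 1), (5, 0), (2, 1), (2, 0), (7, 1), (7, 0), (4, 1), (4, 0)], [(3, 1), (3, 0), (0, 1), (0, 0), (5, 1), (5, 0), (2, 1), (2, 0), (7, 1), (7, 0), (4, 1), (4, 0), (1, 1), (1, 0), (6, 1), (6, 0)]),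
  ([(1, 1), (4, 1), (1, 0), (0, 0), (2, 0), (3, 0), (2, 1), (7, 1), (5, 1), (0, 1), (5, 0), (4, 0), (6, 0), (7, 0), (6, 1), (3, 1)], [(1, 1), (4, 1), (1, 0), (0, 0), (2, 0), (3, 0), (2, 1), (7, 1), (5, 1), (0, 1), (5, 0), (4, 0), (6, 0), (7, 0), (6, 1), (3, 1)]),
  ([(1, 1), (4, 1), (6, 1), (3, 1), (6, 0), (7, 0), (5, 0), (4, 0), (5, 1), (0, 1), (2, 1), (7, 1), (2, 0), (3, 0), (1, 0), (0, 0)], [(7, 1), (4, 1), (7, 0), (0, 0), (6, 0), (5, 0), (6, 1), (1, 1), (3, 1), (0, 1), (3, 0), (4, 0), (2, 0), (1, 0), (2, 1), (5, 1)]),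
  ([(1, 1), (6, 1), (1, 0), (2, 0), (0, 0), (7, 0), (0, 1), (3, 1), (5, 1), (2, 1), (5, 0), (6, 0), (4, 0), (3, 0), (4, 1), (7, 1)], [(2, 0), (3, 0), (1, 0), (0, 0), (1, 1), (4, 1), (6, 1), (3, 1), (6, 0), (7, 0), (5, 0), (4, 0), (5, 1), (0, 1), (2, 1), (7, 1)]),
  ([(1, 1), (6, 1), (4, 1), (7, 1), (4, 0), (3, 0), (5, 0), (6, 0), (5, 1), (2, 1), (0, 1), (3, 1), (0, 0), (7, 0), (1, 0), (2, 0)], [(6, 0), (5, 0), (7, 0), (0, 0), (7, 1), (4, 1), (2, 1), (5, 1), (2, 0), (1, 0), (3, 0), (4, 0), (3, 1), (0, 1), (6, 1), (1, 1)]),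
  ([(2, 0), (1, 0), (2, 1), (5, 1), (7, 1), (4, 1), (7, 0), (0, 0), (6, 0), (5, 0), (6, 1), (1, 1), (3, 1), (0, 1), (3, 0), (4, 0)], [(3, 1), (6, 1), (0, 1), (5, 1), (0, 0), (1, 0), (7, 0), (6, 0), (7, 1), (2, 1), (4, 1), (1, 1), (4, 0), (5, 0), (3, 0), (2, 0)]),
  ([(2, 0), (1, 0), (3, 0), (4, 0), (3, 1), (0, 1), (6, 1), (1, 1), (6, 0), (5, 0), (7, 0), (0, 0), (7, 1), (4, 1), (2, 1), (5, 1)], [(5, 1), (2, 1), (0, 1), (3, 1), (0, 0), (7, 0), (1, 0), (2, 0), (1, 1), (6, 1), (4, 1), (7, 1), (4, 0), (3, 0), (5, 0), (6, 0)]),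
  ([(2, 0), (2, 1), (1, 0), (1, 1), (0, 0), (0, 1), (7, 0), (7, 1), (6, 0), (6, 1), (5, 0), (5, 1), (4, 0), (4, 1), (3, 0), (3, 1)], [(2, 0), (2, 1), (1, 0), (1, 1), (0, 0), (0, 1), (7, 0), (7, 1), (6, 0), (6, 1), (5, 0), (5, 1), (4, 0), (4, 1), (3, 0), (3, 1)]),
  ([(2, 0), (2, 1), (3, 0), (3, 1), (4, 0), (4, 1), (5, 0), (5, 1), (6, 0), (6, 1), (7, 0), (7, 1), (0, 0), (0, 1), (1, 0), (1, 1)], [(6, 0), (6, 1), (7, 0), (7, 1), (0, 0), (0, 1), (1, 0), (1, 1), (2, 0), (2, 1), (3, 0), (3, 1), (4, 0), (4, 1), (5, 0), (5, 1)]),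
  ([(2, 0), (3, 0), (1, 0), (0, 0), (1, 1), (4, 1), (6, 1), (3, 1), (6, 0), (7, 0), (5, 0), (4, 0), (5, 1), (0, 1), (2, 1), (7, 1)], [(1, 1), (6, 1), (1, 0), (2, 0), (0, 0), (7, 0), (0, 1), (3, 1), (5, 1), (2, 1), (5, 0), (6, 0), (4, 0), (3, 0), (4, 1), (7, 1)]),
  ([(2, 0), (3, 0), (2, 1), (7, 1), (5, 1), (0, 1), (5, 0), (4, 0), (6, 0), (7, 0), (6, 1), (3, 1), (1, 1), (4, 1), (1, 0), (0, 0)], [(7, 1), (2, 1), (7, 0), (6, 0), (0, 0), (1, 0), (0, 1), (5, 1), (3, 1), (6, 1), (3, 0), (2, 0), (4, 0), (5, 0), (4, 1), (1, 1)]),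
  ([(2, 1), (2, 0), (5, 1), (5, 0), (0, 1), (0, 0), (3, 1), (3, 0), (6, 1), (6, 0), (1, 1), (1, 0), (4, 1), (4, 0), (7, 1), (7, 0)], [(2, 1), (2, 0), (5, 1), (5, 0), (0, 1), (0, 0), (3, 1), (3, 0), (6, 1), (6, 0), (1, 1), (1, 0), (4, 1), (4, 0), (7, 1), (7, 0)]),
  ([(2, 1), (2, 0), (7, 1), (7, 0), (4, 1), (4, 0), (1, 1), (1, 0), (6, 1), (6, 0), (3, 1), (3, 0), (0, 1), (0, 0), (5, 1), (5, 0)], [(6, 1), (6, 0), (3, 1), (3, 0), (0, 1), (0, 0), (5, 1), (5, 0), (2, 1), (2, 0), (7, 1), (7, 0), (4, 1), (4, 0), (1, 1), (1, 0)]),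
  ([(2, 1), (5, 1), (2, 0), (1, 0), (3, 0), (4, 0), (3, 1), (0, 1), (6, 1), (1, 1), (6, 0), (5, 0), (7, 0), (0, 0), (7, 1), (4, 1)], [(6, 1), (3, 1), (1, 1), (4, 1), (1, 0), (0, 0), (2, 0), (3, 0), (2, 1), (7, 1), (5, 1), (0, 1), (5, 0), (4, 0), (6, 0), (7, 0)]),
  ([(2, 1), (5, 1), (7, 1), (4, 1), (7, 0), (0, 0), (6, 0), (5, 0), (6, 1), (1, 1), (3, 1), (0, 1), (3, 0), (4, 0), (2, 0), (1, 0)], [(2, 1), (5, 1), (7, 1), (4, 1), (7, 0), (0, 0), (6, 0), (5, 0), (6, 1), (1, 1), (3, 1), (0, 1), (3, 0), (4, 0), (2, 0), (1, 0)]),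
  ([(2, 1), (7, 1), (2, 0), (3, 0), (1, 0), (0, 0), (1, 1), (4, 1), (6, 1), (3, 1), (6, 0), (7, 0), (5, 0), (4, 0), (5, 1), (0, 1)], [(2, 1), (7, 1), (2, 0), (3, 0), (1, 0), (0, 0), (1, 1), (4, 1), (6, 1), (3, 1), (6, 0), (7, 0), (5, 0), (4, 0), (5, 1), (0, 1)]),
  ([(2, 1), (7, 1), (5, 1), (0, 1), (5, 0), (4, 0), (6, 0), (7, 0), (6, 1), (3, 1), (1, 1), (4, 1), (1, 0), (0, 0), (2, 0), (3, 0)], [(6, 1), (1, 1), (6, 0), (5, 0), (7, 0), (0, 0), (7, 1), (4, 1), (2, 1), (5, 1), (2, 0), (1, 0), (3, 0), (4, 0), (3, 1), (0, 1)]),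
  ([(3, 0), (2, 0), (3, 1), (6, 1), (0, 1), (5, 1), (0, 0), (1, 0), (7, 0), (6, 0), (7, 1), (2, 1), (4, 1), (1, 1), (4, 0), (5, 0)], [(3, 0), (2, 0), (3, 1), (6, 1), (0, 1), (5, 1), (0, 0), (1, 0), (7, 0), (6, 0), (7, 1), (2, 1), (4, 1), (1, 1), (4, 0), (5, 0)]),
  ([(3, 0), (2, 0), (4, 0), (5, 0), (4, 1), (1, 1), (7, 1), (2, 1), (7, 0), (6, 0), (0, 0), (1, 0), (0, 1), (5, 1), (3, 1), (6, 1)], [(5, 0), (6, 0), (5, 1), (2, 1), (0, 1), (3, 1), (0, 0), (7, 0), (1, 0), (2, 0), (1, 1), (6, 1), (4, 1), (7, 1), (4, 0), (3, 0)]),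
  ([(3, 0), (3, 1), (2, 0), (2, 1), (1, 0), (1, 1), (0, 0), (0, 1), (7, 0), (7, 1), (6, 0), (6, 1), (5, 0), (5, 1), (4, 0), (4, 1)], [(3, 0), (3, 1), (2, 0), (2, 1), (1, 0), (1, 1), (0, 0), (0, 1), (7, 0), (7, 1), (6, 0), (6, 1), (5, 0), (5, 1), (4, 0), (4, 1)]),
  ([(3, 0), (3, 1), (4, 0), (4, 1), (5, 0), (5, 1), (6, 0), (6, 1), (7, 0), (7, 1), (0, 0), (0, 1), (1, 0), (1, 1), (2, 0), (2, 1)], [(5, 0), (5, 1), (6, 0), (6, 1), (7, 0), (7, 1), (0, 0), (0, 1), (1, 0), (1, 1), (2, 0), (2, 1), (3, 0), (3, 1), (4, 0), (4, 1)]),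
  ([(3, 0), (4, 0), (2, 0), (1, 0), (2, 1), (5, 1), (7, 1), (4, 1), (7, 0), (0, 0), (6, 0), (5, 0), (6, 1), (1, 1), (3, 1), (0, 1)], [(4, 1), (7, 1), (1, 1), (6, 1), (1, 0), (2, 0), (0, 0), (7, 0), (0, 1), (3, 1), (5, 1), (2, 1), (5, 0), (6, 0), (4, 0), (3, 0)]),
  ([(3, 0), (4, 0), (3, 1), (0, 1), (6, 1), (1, 1), (6, 0), (5, 0), (7, 0), (0, 0), (7, 1), (4, 1), (2, 1), (5, 1), (2, 0), (1, 0)], [(4, 1), (1, 1), (7, 1), (2, 1), (7, 0), (6, 0), (0, 0), (1, 0), (0, 1), (5, 1), (3, 1), (6, 1), (3, 0), (2, 0), (4, 0), (5, 0)]),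
  ([(3, 1), (0, 1), (3, 0), (4, 0), (2, 0), (1, 0), (2, 1), (5, 1), (7, 1), (4, 1), (7, 0), (0, 0), (6, 0), (5, 0), (6, 1), (1, 1)], [(5, 1), (0, 1), (2, 1), (7, 1), (2, 0), (3, 0), (1, 0), (0, 0), (1, 1), (4, 1), (6, 1), (3, 1), (6, 0), (7, 0), (5, 0), (4, 0)]),
  ([(3, 1), (0, 1), (6, 1), (1, 1), (6, 0), (5, 0), (7, 0), (0, 0), (7, 1), (4, 1), (2, 1), (5, 1), (2, 0), (1, 0), (3, 0), (4, 0)], [(3, 1), (0, 1), (6, 1), (1, 1), (6, 0), (5, 0), (7, 0), (0, 0), (7, 1), (4, 1), (2, 1), (5, 1), (2, 0), (1, 0), (3, 0), (4, 0)]),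
  ([(3, 1), (3, 0), (0, 1), (0, 0), (5, 1), (5, 0), (2, 1), (2, 0), (7, 1), (7, 0), (4, 1), (4, 0), (1, 1), (1, 0), (6, 1), (6, 0)], [(1, 1), (1, 0), (6, 1), (6, 0), (3, 1), (3, 0), (0, 1), (0, 0), (5, 1), (5, 0), (2, 1), (2, 0), (7, 1), (7, 0), (4, 1), (4, 0)]),
  ([(3, 1), (3, 0), (6, 1), (6, 0), (1, 1), (1, 0), (4, 1), (4, 0), (7, 1), (7, 0), (2, 1), (2, 0), (5, 1), (5, 0), (0, 1), (0, 0)], [(7, 1), (7, 0), (2, 1), (2, 0), (5, 1), (5, 0), (0, 1), (0, 0), (3, 1), (3, 0), (6, 1), (6, 0), (1, 1), (1, 0), (4, 1), (4, 0)]),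
  ([(3, 1), (6, 1), (0, 1), (5, 1), (0, 0), (1, 0), (7, 0), (6, 0), (7, 1), (2, 1), (4, 1), (1, 1), (4, 0), (5, 0), (3, 0), (2, 0)], [(2, 0), (1, 0), (2, 1), (5, 1), (7, 1), (4, 1), (7, 0), (0, 0), (6, 0), (5, 0), (6, 1), (1, 1), (3, 1), (0, 1), (3, 0), (4, 0)]),
  ([(3, 1), (6, 1), (3, 0), (2, 0), (4, 0), (5, 0), (4, 1), (1, 1), (7, 1), (2, 1), (7, 0), (6, 0), (0, 0), (1, 0), (0, 1), (5, 1)], [(6, 0), (7, 0), (6, 1), (3, 1), (1, 1), (4, 1), (1, 0), (0, 0), (2, 0), (3, 0), (2, 1), (7, 1), (5, 1), (0, 1), (5, 0), (4, 0)]),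
  ([(4, 0), (3, 0), (4, 1), (7, 1), (1, 1), (6, 1), (1, 0), (2, 0), (0, 0), (7, 0), (0, 1), (3, 1), (5, 1), (2, 1), (5, 0), (6, 0)], [(4, 0), (5, 0), (3, 0), (2, 0), (3, 1), (6, 1), (0, 1), (5, 1), (0, 0), (1, 0), (7, 0), (6, 0), (7, 1), (2, 1), (4, 1), (1, 1)]),
  ([(4, 0), (3, 0), (5, 0), (6, 0), (5, 1), (2, 1), (0, 1), (3, 1), (0, 0), (7, 0), (1, 0), (2, 0), (1, 1), (6, 1), (4, 1), (7, 1)], [(4, 0), (3, 0), (5, 0), (6, 0), (5, 1), (2, 1), (0, 1), (3, 1), (0, 0), (7, 0), (1, 0), (2, 0), (1, 1), (6, 1), (4, 1), (7, 1)]),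
  ([(4, 0), (4, 1), (3, 0), (3, 1), (2, 0), (2, 1), (1, 0), (1, 1), (0, 0), (0, 1), (7, 0), (7, 1), (6, 0), (6, 1), (5, 0), (5, 1)], [(4, 0), (4, 1), (3, 0), (3, 1), (2, 0), (2, 1), (1, 0), (1, 1), (0, 0), (0, 1), (7, 0), (7, 1), (6, 0), (6, 1), (5, 0), (5, 1)]),
  ([(4, 0), (4, 1), (5, 0), (5, 1), (6, 0), (6, 1), (7, 0), (7, 1), (0, 0), (0, 1), (1, 0), (1, 1), (2, 0), (2, 1), (3, 0), (3, 1)], [(4, 0), (4, 1), (5, 0), (5, 1), (6, 0), (6, 1), (7, 0), (7, 1), (0, 0), (0, 1), (1, 0), (1, 1), (2, 0), (2, 1), (3, 0), (3, 1)]),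
  ([(4, 0), (5, 0), (3, 0), (2, 0), (3, 1), (6, 1), (0, 1), (5, 1), (0, 0), (1, 0), (7, 0), (6, 0), (7, 1), (2, 1), (4, 1), (1, 1)], [(4, 0), (3, 0), (4, 1), (7, 1), (1, 1), (6, 1), (1, 0), (2, 0), (0, 0), (7, 0), (0, 1), (3, 1), (5, 1), (2, 1), (5, 0), (6, 0)]),
  ([(4, 0), (5, 0), (4, 1), (1, 1), (7, 1), (2, 1), (7, 0), (6, 0), (0, 0), (1, 0), (0, 1), (5, 1), (3, 1), (6, 1), (3, 0), (2, 0)], [(4, 0), (5, 0), (4, 1), (1, 1), (7, 1), (2, 1), (7, 0), (6, 0), (0, 0), (1, 0), (0, 1), (5, 1), (3, 1), (6, 1), (3, 0), (2, 0)]),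
  ([(4, 1), (1, 1), (4, 0), (5, 0), (3, 0), (2, 0), (3, 1), (6, 1), (0, 1), (5, 1), (0, 0), (1, 0), (7, 0), (6, 0), (7, 1), (2, 1)], [(5, 0), (4, 0), (5, 1), (0, 1), (2, 1), (7, 1), (2, 0), (3, 0), (1, 0), (0, 0), (1, 1), (4, 1), (6, 1), (3, 1), (6, 0), (7, 0)]),
  ([(4, 1), (1, 1), (7, 1), (2, 1), (7, 0), (6, 0), (0, 0), (1, 0), (0, 1), (5, 1), (3, 1), (6, 1), (3, 0), (2, 0), (4, 0), (5, 0)], [(3, 0), (4, 0), (3, 1), (0, 1), (6, 1), (1, 1), (6, 0), (5, 0), (7, 0), (0, 0), (7, 1), (4, 1), (2, 1), (5, 1), (2, 0), (1, 0)]),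
  ([(4, 1), (4, 0), (1, 1), (1, 0), (6, 1), (6, 0), (3, 1), (3, 0), (0, 1), (0, 0), (5, 1), (5, 0), (2, 1), (2, 0), (7, 1), (7, 0)], [(4, 1), (4, 0), (1, 1), (1, 0), (6, 1), (6, 0), (3, 1), (3, 0), (0, 1), (0, 0), (5, 1), (5, 0), (2, 1), (2, 0), (7, 1), (7, 0)]),
  ([(4, 1), (4, 0), (7, 1), (7, 0), (2, 1), (2, 0), (5, 1), (5, 0), (0, 1), (0, 0), (3, 1), (3, 0), (6, 1), (6, 0), (1, 1), (1, 0)], [(4, 1), (4, 0), (7, 1), (7, 0), (2, 1), (2, 0), (5, 1), (5, 0), (0, 1), (0, 0), (3, 1), (3, 0), (6, 1), (6, 0), (1, 1), (1, 0)]),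
  ([(4, 1), (7, 1), (1, 1), (6, 1), (1, 0), (2, 0), (0, 0), (7, 0), (0, 1), (3, 1), (5, 1), (2, 1), (5, 0), (6, 0), (4, 0), (3, 0)], [(3, 0), (4, 0), (2, 0), (1, 0), (2, 1), (5, 1), (7, 1), (4, 1), (7, 0), (0, 0), (6, 0), (5, 0), (6, 1), (1, 1), (3, 1), (0, 1)]),
  ([(4, 1), (7, 1), (4, 0), (3, 0), (5, 0), (6, 0), (5, 1), (2, 1), (0, 1), (3, 1), (0, 0), (7, 0), (1, 0), (2, 0), (1, 1), (6, 1)], [(5, 0), (4, 0), (6, 0), (7, 0), (6, 1), (3, 1), (1, 1), (4, 1), (1, 0), (0, 0), (2, 0), (3, 0), (2, 1), (7, 1), (5, 1), (0, 1)]),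
  ([(5, 0), (4, 0), (5, 1), (0, 1), (2, 1), (7, 1), (2, 0), (3, 0), (1, 0), (0, 0), (1, 1), (4, 1), (6, 1), (3, 1), (6, 0), (7, 0)], [(4, 1), (1, 1), (4, 0), (5, 0), (3, 0), (2, 0), (3, 1), (6, 1), (0, 1), (5, 1), (0, 0), (1, 0), (7, 0), (6, 0), (7, 1), (2, 1)]),
  ([(5, 0), (4, 0), (6, 0), (7, 0), (6, 1), (3, 1), (1, 1), (4, 1), (1, 0), (0, 0), (2, 0), (3, 0), (2, 1), (7, 1), (5, 1), (0, 1)], [(4, 1), (7, 1), (4, 0), (3, 0), (5, 0), (6, 0), (5, 1), (2, 1), (0, 1), (3, 1), (0, 0), (7, 0), (1, 0), (2, 0), (1, 1), (6, 1)]),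
  ([(5, 0), (5, 1), (4, 0), (4, 1), (3, 0), (3, 1), (2, 0), (2, 1), (1, 0), (1, 1), (0, 0), (0, 1), (7, 0), (7, 1), (6, 0), (6, 1)], [(5, 0), (5, 1), (4, 0), (4, 1), (3, 0), (3, 1), (2, 0), (2, 1), (1, 0), (1, 1), (0, 0), (0, 1), (7, 0), (7, 1), (6, 0), (6, 1)]),
  ([(5, 0), (5, 1), (6, 0), (6, 1), (7, 0), (7, 1), (0, 0), (0, 1), (1, 0), (1, 1), (2, 0), (2, 1), (3, 0), (3, 1), (4, 0), (4, 1)], [(3, 0), (3, 1), (4, 0), (4, 1), (5, 0), (5, 1), (6, 0), (6, 1), (7, 0), (7, 1), (0, 0), (0, 1), (1, 0), (1, 1), (2, 0), (2, 1)]),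
  ([(5, 0), (6, 0), (4, 0), (3, 0), (4, 1), (7, 1), (1, 1), (6, 1), (1, 0), (2, 0), (0, 0), (7, 0), (0, 1), (3, 1), (5, 1), (2, 1)], [(5, 0), (6, 0), (4, 0), (3, 0), (4, 1), (7, 1), (1, 1), (6, 1), (1, 0), (2, 0), (0, 0), (7, 0), (0, 1), (3, 1), (5, 1), (2, 1)]),
  ([(5, 0), (6, 0), (5, 1), (2, 1), (0, 1), (3, 1), (0, 0), (7, 0), (1, 0), (2, 0), (1, 1), (6, 1), (4, 1), (7, 1), (4, 0), (3, 0)], [(3, 0), (2, 0), (4, 0), (5, 0), (4, 1), (1, 1), (7, 1), (2, 1), (7, 0), (6, 0), (0, 0), (1, 0), (0, 1), (5, 1), (3, 1), (6, 1)]),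
  ([(5, 1), (0, 1), (2, 1), (7, 1), (2, 0), (3, 0), (1, 0), (0, 0), (1, 1), (4, 1), (6, 1), (3, 1), (6, 0), (7, 0), (5, 0), (4, 0)], [(3, 1), (0, 1), (3, 0), (4, 0), (2, 0), (1, 0), (2, 1), (5, 1), (7, 1), (4, 1), (7, 0), (0, 0), (6, 0), (5, 0), (6, 1), (1, 1)]),
  ([(5, 1), (0, 1), (5, 0), (4, 0), (6, 0), (7, 0), (6, 1), (3, 1), (1, 1), (4, 1), (1, 0), (0, 0), (2, 0), (3, 0), (2, 1), (7, 1)], [(5, 1), (0, 1), (5, 0), (4, 0), (6, 0), (7, 0), (6, 1), (3, 1), (1, 1), (4, 1), (1, 0), (0, 0), (2, 0), (3, 0), (2, 1), (7, 1)]),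
  ([(5, 1), (2, 1), (0, 1), (3, 1), (0, 0), (7, 0), (1, 0), (2, 0), (1, 1), (6, 1), (4, 1), (7, 1), (4, 0), (3, 0), (5, 0), (6, 0)], [(2, 0), (1, 0), (3, 0), (4, 0), (3, 1), (0, 1), (6, 1), (1, 1), (6, 0), (5, 0), (7, 0), (0, 0), (7, 1), (4, 1), (2, 1), (5, 1)]),
  ([(5, 1), (2, 1), (5, 0), (6, 0), (4, 0), (3, 0), (4, 1), (7, 1), (1, 1), (6, 1), (1, 0), (2, 0), (0, 0), (7, 0), (0, 1), (3, 1)], [(6, 0), (7, 0), (5, 0), (4, 0), (5, 1), (0, 1), (2, 1), (7, 1), (2, 0), (3, 0), (1, 0), (0, 0), (1, 1), (4, 1), (6, 1), (3, 1)]),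
  ([(5, 1), (5, 0), (0, 1), (0, 0), (3, 1), (3, 0), (6, 1), (6, 0), (1, 1), (1, 0), (4, 1), (4, 0), (7, 1), (7, 0), (2, 1), (2, 0)], [(1, 1), (1, 0), (4, 1), (4, 0), (7, 1), (7, 0), (2, 1), (2, 0), (5, 1), (5, 0), (0, 1), (0, 0), (3, 1), (3, 0), (6, 1), (6, 0)]),
  ([(5, 1), (5, 0), (2, 1), (2, 0), (7, 1), (7, 0), (4, 1), (4, 0), (1, 1), (1, 0), (6, 1), (6, 0), (3, 1), (3, 0), (0, 1), (0, 0)], [(7, 1), (7, 0), (4, 1), (4, 0), (1, 1), (1, 0), (6, 1), (6, 0), (3, 1), (3, 0), (0, 1), (0, 0), (5, 1), (5, 0), (2, 1), (2, 0)]),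
  ([(6, 0), (5, 0), (6, 1), (1, 1), (3, 1), (0, 1), (3, 0), (4, 0), (2, 0), (1, 0), (2, 1), (5, 1), (7, 1), (4, 1), (7, 0), (0, 0)], [(7, 1), (2, 1), (4, 1), (1, 1), (4, 0), (5, 0), (3, 0), (2, 0), (3, 1), (6, 1), (0, 1), (5, 1), (0, 0), (1, 0), (7, 0), (6, 0)]),
  ([(6, 0), (5, 0), (7, 0), (0, 0), (7, 1), (4, 1), (2, 1), (5, 1), (2, 0), (1, 0), (3, 0), (4, 0), (3, 1), (0, 1), (6, 1), (1, 1)], [(1, 1), (6, 1), (4, 1), (7, 1), (4, 0), (3, 0), (5, 0), (6, 0), (5, 1), (2, 1), (0, 1), (3, 1), (0, 0), (7, 0), (1, 0), (2, 0)]),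
  ([(6, 0), (6, 1), (5, 0), (5, 1), (4, 0), (4, 1), (3, 0), (3, 1), (2, 0), (2, 1), (1, 0), (1, 1), (0, 0), (0, 1), (7, 0), (7, 1)], [(6, 0), (6, 1), (5, 0), (5, 1), (4, 0), (4, 1), (3, 0), (3, 1), (2, 0), (2, 1), (1, 0), (1, 1), (0, 0), (0, 1), (7, 0), (7, 1)]),
  ([(6, 0), (6, 1), (7, 0), (7, 1), (0, 0), (0, 1), (1, 0), (1, 1), (2, 0), (2, 1), (3, 0), (3, 1), (4, 0), (4, 1), (5, 0), (5, 1)], [(2, 0), (2, 1), (3, 0), (3, 1), (4, 0), (4, 1), (5, 0), (5, 1), (6, 0), (6, 1), (7, 0), (7, 1), (0, 0), (0, 1), (1, 0), (1, 1)]),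
  ([(6, 0), (7, 0), (5, 0), (4, 0), (5, 1), (0, 1), (2, 1), (7, 1), (2, 0), (3, 0), (1, 0), (0, 0), (1, 1), (4, 1), (6, 1), (3, 1)], [(5, 1), (2, 1), (5, 0), (6, 0), (4, 0), (3, 0), (4, 1), (7, 1), (1, 1), (6, 1), (1, 0), (2, 0), (0, 0), (7, 0), (0, 1), (3, 1)]),
  ([(6, 0), (7, 0), (6, 1), (3, 1), (1, 1), (4, 1), (1, 0), (0, 0), (2, 0), (3, 0), (2, 1), (7, 1), (5, 1), (0, 1), (5, 0), (4, 0)], [(3, 1), (6, 1), (3, 0), (2, 0), (4, 0), (5, 0), (4, 1), (1, 1), (7, 1), (2, 1), (7, 0), (6, 0), (0, 0), (1, 0), (0, 1), (5, 1)]),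
  ([(6, 1), (1, 1), (3, 1), (0, 1), (3, 0), (4, 0), (2, 0), (1, 0), (2, 1), (5, 1), (7, 1), (4, 1), (7, 0), (0, 0), (6, 0), (5, 0)], [(6, 1), (1, 1), (3, 1), (0, 1), (3, 0), (4, 0), (2, 0), (1, 0), (2, 1), (5, 1), (7, 1), (4, 1), (7, 0), (0, 0), (6, 0), (5, 0)]),
  ([(6, 1), (1, 1), (6, 0), (5, 0), (7, 0), (0, 0), (7, 1), (4, 1), (2, 1), (5, 1), (2, 0), (1, 0), (3, 0), (4, 0), (3, 1), (0, 1)], [(2, 1), (7, 1), (5, 1), (0, 1), (5, 0), (4, 0), (6, 0), (7, 0), (6, 1), (3, 1), (1, 1), (4, 1), (1, 0), (0, 0), (2, 0), (3, 0)]),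
  ([(6, 1), (3, 1), (1, 1), (4, 1), (1, 0), (0, 0), (2, 0), (3, 0), (2, 1), (7, 1), (5, 1), (0, 1), (5, 0), (4, 0), (6, 0), (7, 0)], [(2, 1), (5, 1), (2, 0), (1, 0), (3, 0), (4, 0), (3, 1), (0, 1), (6, 1), (1, 1), (6, 0), (5, 0), (7, 0), (0, 0), (7, 1), (4, 1)]),
  ([(6, 1), (3, 1), (6, 0), (7, 0), (5, 0), (4, 0), (5, 1), (0, 1), (2, 1), (7, 1), (2, 0), (3, 0), (1, 0), (0, 0), (1, 1), (4, 1)], [(6, 1), (3, 1), (6, 0), (7, 0), (5, 0), (4, 0), (5, 1), (0, 1), (2, 1), (7, 1), (2, 0), (3, 0), (1, 0), (0, 0), (1, 1), (4, 1)]),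
  ([(6, 1), (6, 0), (1, 1), (1, 0), (4, 1), (4, 0), (7, 1), (7, 0), (2, 1), (2, 0), (5, 1), (5, 0), (0, 1), (0, 0), (3, 1), (3, 0)], [(6, 1), (6, 0), (1, 1), (1, 0), (4, 1), (4, 0), (7, 1), (7, 0), (2, 1), (2, 0), (5, 1), (5, 0), (0, 1), (0, 0), (3, 1), (3, 0)]),
  ([(6, 1), (6, 0), (3, 1), (3, 0), (0, 1), (0, 0), (5, 1), (5, 0), (2, 1), (2, 0), (7, 1), (7, 0), (4, 1), (4, 0), (1, 1), (1, 0)], [(2, 1), (2, 0), (7, 1), (7, 0), (4, 1), (4, 0), (1, 1), (1, 0), (6, 1), (6, 0), (3, 1), (3, 0), (0, 1), (0, 0), (5, 1), (5, 0)]),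
  ([(7, 0), (0, 0), (6, 0), (5, 0), (6, 1), (1, 1), (3, 1), (0, 1), (3, 0), (4, 0), (2, 0), (1, 0), (2, 1), (5, 1), (7, 1), (4, 1)], [(0, 1), (3, 1), (5, 1), (2, 1), (5, 0), (6, 0), (4, 0), (3, 0), (4, 1), (7, 1), (1, 1), (6, 1), (1, 0), (2, 0), (0, 0), (7, 0)]),
  ([(7, 0), (0, 0), (7, 1), (4, 1), (2, 1), (5, 1), (2, 0), (1, 0), (3, 0), (4, 0), (3, 1), (0, 1), (6, 1), (1, 1), (6, 0), (5, 0)], [(0, 1), (5, 1), (3, 1), (6, 1), (3, 0), (2, 0), (4, 0), (5, 0), (4, 1), (1, 1), (7, 1), (2, 1), (7, 0), (6, 0), (0, 0), (1, 0)]),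
  ([(7, 0), (6, 0), (0, 0), (1, 0), (0, 1), (5, 1), (3, 1), (6, 1), (3, 0), (2, 0), (4, 0), (5, 0), (4, 1), (1, 1), (7, 1), (2, 1)], [(1, 0), (2, 0), (1, 1), (6, 1), (4, 1), (7, 1), (4, 0), (3, 0), (5, 0), (6, 0), (5, 1), (2, 1), (0, 1), (3, 1), (0, 0), (7, 0)]),
  ([(7, 0), (6, 0), (7, 1), (2, 1), (4, 1), (1, 1), (4, 0), (5, 0), (3, 0), (2, 0), (3, 1), (6, 1), (0, 1), (5, 1), (0, 0), (1, 0)], [(7, 0), (6, 0), (7, 1), (2, 1), (4, 1), (1, 1), (4, 0), (5, 0), (3, 0), (2, 0), (3, 1), (6, 1), (0, 1), (5, 1), (0, 0), (1, 0)]),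
  ([(7, 0), (7, 1), (0, 0), (0, 1), (1, 0), (1, 1), (2, 0), (2, 1), (3, 0), (3, 1), (4, 0), (4, 1), (5, 0), (5, 1), (6, 0), (6, 1)], [(1, 0), (1, 1), (2, 0), (2, 1), (3, 0), (3, 1), (4, 0), (4, 1), (5, 0), (5, 1), (6, 0), (6, 1), (7, 0), (7, 1), (0, 0), (0, 1)]),
  ([(7, 0), (7, 1), (6, 0), (6, 1), (5, 0), (5, 1), (4, 0), (4, 1), (3, 0), (3, 1), (2, 0), (2, 1), (1, 0), (1, 1), (0, 0), (0, 1)], [(7, 0), (7, 1), (6, 0), (6, 1), (5, 0), (5, 1), (4, 0), (4, 1), (3, 0), (3, 1), (2, 0), (2, 1), (1, 0), (1, 1), (0, 0), (0, 1)]),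
  ([(7, 1), (2, 1), (4, 1), (1, 1), (4, 0), (5, 0), (3, 0), (2, 0), (3, 1), (6, 1), (0, 1), (5, 1), (0, 0), (1, 0), (7, 0), (6, 0)], [(6, 0), (5, 0), (6, 1), (1, 1), (3, 1), (0, 1), (3, 0), (4, 0), (2, 0), (1, 0), (2, 1), (5, 1), (7, 1), (4, 1), (7, 0), (0, 0)]),
  ([(7, 1), (2, 1), (7, 0), (6, 0), (0, 0), (1, 0), (0, 1), (5, 1), (3, 1), (6, 1), (3, 0), (2, 0), (4, 0), (5, 0), (4, 1), (1, 1)], [(2, 0), (3, 0), (2, 1), (7, 1), (5, 1), (0, 1), (5, 0), (4, 0), (6, 0), (7, 0), (6, 1), (3, 1), (1, 1), (4, 1), (1, 0), (0, 0)]),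
  ([(7, 1), (4, 1), (2, 1), (5, 1), (2, 0), (1, 0), (3, 0), (4, 0), (3, 1), (0, 1), (6, 1), (1, 1), (6, 0), (5, 0), (7, 0), (0, 0)], [(7, 1), (4, 1), (2, 1), (5, 1), (2, 0), (1, 0), (3, 0), (4, 0), (3, 1), (0, 1), (6, 1), (1, 1), (6, 0), (5, 0), (7, 0), (0, 0)]),
  ([(7, 1), (4, 1), (7, 0), (0, 0), (6, 0), (5, 0), (6, 1), (1, 1), (3, 1), (0, 1), (3, 0), (4, 0), (2, 0), (1, 0), (2, 1), (5, 1)], [(1, 1), (4, 1), (6, 1), (3, 1), (6, 0), (7, 0), (5, 0), (4, 0), (5, 1), (0, 1), (2, 1), (7, 1), (2, 0), (3, 0), (1, 0), (0, 0)]),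
  ([(7, 1), (7, 0), (2, 1), (2, 0), (5, 1), (5, 0), (0, 1), (0, 0), (3, 1), (3, 0), (6, 1), (6, 0), (1, 1), (1, 0), (4, 1), (4, 0)], [(3, 1), (3, 0), (6, 1), (6, 0), (1, 1), (1, 0), (4, 1), (4, 0), (7, 1), (7, 0), (2, 1), (2, 0), (5, 1), (5, 0), (0, 1), (0, 0)]),
  ([(7, 1), (7, 0), (4, 1), (4, 0), (1, 1), (1, 0), (6, 1), (6, 0), (3, 1), (3, 0), (0, 1), (0, 0), (5, 1), (5, 0), (2, 1), (2, 0)], [(5, 1), (5, 0), (2, 1), (2, 0), (7, 1), (7, 0), (4, 1), (4, 0), (1, 1), (1, 0), (6, 1), (6, 0), (3, 1), (3, 0), (0, 1), (0, 0)])]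


def fn (t : List MKV) (v : MKV) : MKV := t.getD (v.1.val * 2 + v.2.val) v

def autoP (p : List MKV × List MKV) : Prop :=
  (∀ v, fn p.2 (fn p.1 v) = v) ∧ (∀ v, fn p.1 (fn p.2 v) = v) ∧
    ∀ v w, mkRel (fn p.1 v) (fn p.1 w) = mkRel v w

instance : DecidablePred autoP := fun p => by unfold autoP; infer_instance

lemma tbls_autoP : ∀ p ∈ tbls, autoP p := by decide

def mkAuto (p : List MKV × List MKV) (hp : autoP p) : MK ≃g MK where
  toFun := fn p.1
  invFun := fn p.2
  left_inv := hp.1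
  right_inv := hp.2.1
  map_rel_iff' := by
    intro a b
    show mkRel (fn p.1 a) (fn p.1 b) = true ↔ mkRel a b = true
    rw [hp.2.2]

lemma iso_ext {f g : MK ≃g MK} (h : ∀ v, f v = g v) : f = g := by
  cases f; cases g
  simp only [RelIso.mk.injEq]
  exact Equiv.ext h

lemma mkRel_map (T : MK ≃g MK) (v w : MKV) : mkRel (T v) (T w) = mkRel v w := by
  have h : (mkRel (T v) (T w) = true) ↔ (mkRel v w = true) := T.map_adj_iff
  cases hvw : mkRel v w with
  | true => exact h.mpr hvw
  | false =>
    cases hx : mkRel (T v) (T w) with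
    | false => rfl
    | true => rw [hvw] at h; exact absurd (h.mp hx) (by simp)

def allV : List MKV := [(0,0),(0,1),(1,0),(1,1),(2,0),(2,1),(3,0),(3,1),
  (4,0),(4,1),(5,0),(5,1),(6,0),(6,1),(7,0),(7,1)]

lemma mem_allV : ∀ v : MKV, v ∈ allV := by decide

def nbhd (l : List MKV) : List MKV :=
  allV.filter (fun w => decide (w ∈ l) || l.any (fun u => mkRel w u))

def ball : Nat → MKV → List MKV
  | 0, v => [v]
  | n+1, v => nbhd (ball n v)

lemma mem_nbhd {l : List MKV} {w : MKV} :
    w ∈ nbhd l ↔ w ∈ l ∨ ∃ u ∈ l, mkRel w u = true := by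
  simp [nbhd, mem_allV, List.mem_filter]

lemma ball_map (T : MK ≃g MK) : ∀ (n : Nat) (v w : MKV), w ∈ ball n v ↔ T w ∈ ball n (T v)
  | 0, v, w => by
    simp only [ball, List.mem_singleton]
    exact ⟨fun h => by rw [h], fun h => T.injective h⟩
  | n+1, v, w => by
    simp only [ball, mem_nbhd]
    constructor
    · rintro (h | ⟨u, hu, hr⟩)
      · exact Or.inl ((ball_map T n v w).mp h)
      · exact Or.inr ⟨T u, (ball_map T n v u).mp hu, by rw [mkRel_map]; exact hr⟩
    · rintro (h | ⟨u, hu, hr⟩)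
      · exact Or.inl ((ball_map T n v w).mpr h)
      · rw [← T.apply_symm_apply u] at hu hr
        exact Or.inr ⟨T.symm u, (ball_map T n v _).mpr hu, by rwa [mkRel_map] at hr⟩

lemma forced (h : MK ≃g MK) (spec : List (MKV × Nat))
    (hF : ∀ p ∈ spec, h p.1 = p.1) (v : MKV)
    (huniq : ∀ w, (∀ p ∈ spec, decide (p.1 ∈ ball p.2 w) = decide (p.1 ∈ ball p.2 v)) → w = v) :
    h v = v := by
  apply huniq
  intro p hp
  rw [decide_eq_decide]
  have h1 : p.1 ∈ ball p.2 v ↔ h p.1 ∈ ball p.2 (h v) := ball_map h p.2 v p.1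
  rw [hF p hp] at h1
  exact h1.symm

lemma rigid (h : MK ≃g MK) (e00 : h (0, 0) = (0, 0)) (e10 : h (1, 0) = (1, 0))
    (e01 : h (0, 1) = (0, 1)) : ∀ v, h v = v := by
  have e40 : h (4, 0) = (4, 0) := forced h [((0, 0), 3)] (by intro p hp; fin_cases hp <;> assumption) _ (by decide)
  have e41 : h (4, 1) = (4, 1) := forced h [((0, 1), 3)] (by intro p hp; fin_cases hp <;> assumption) _ (by decide)
  have e50 : h (5, 0) = (5, 0) := forced h [((1, 0), 3)] (by intro p hp; fin_cases hp <;> assumption) _ (by decide)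
  have e70 : h (7, 0) = (7, 0) := forced h [((0, 0), 1), ((1, 0), 1), ((0, 1), 1)] (by intro p hp; fin_cases hp <;> assumption) _ (by decide)
  have e11 : h (1, 1) = (1, 1) := forced h [((1, 0), 1), ((4, 1), 1)] (by intro p hp; fin_cases hp <;> assumption) _ (by decide)
  have e20 : h (2, 0) = (2, 0) := forced h [((0, 0), 1), ((1, 0), 1), ((4, 1), 1)] (by intro p hp; fin_cases hp <;> assumption) _ (by decide)
  have e30 : h (3, 0) = (3, 0) := forced h [((7, 0), 3)] (by intro p hp; fin_cases hp <;> assumption) _ (by decide)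
  have e31 : h (3, 1) = (3, 1) := forced h [((0, 0), 1), ((0, 1), 1), ((5, 0), 1)] (by intro p hp; fin_cases hp <;> assumption) _ (by decide)
  have e51 : h (5, 1) = (5, 1) := forced h [((0, 1), 1), ((5, 0), 1)] (by intro p hp; fin_cases hp <;> assumption) _ (by decide)
  have e60 : h (6, 0) = (6, 0) := forced h [((5, 0), 1), ((7, 0), 1)] (by intro p hp; fin_cases hp <;> assumption) _ (by decide)
  have e71 : h (7, 1) = (7, 1) := forced h [((4, 1), 1), ((7, 0), 1)] (by intro p hp; fin_cases hp <;> assumption) _ (by decide)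
  have e21 : h (2, 1) = (2, 1) := forced h [((2, 0), 1), ((5, 1), 1)] (by intro p hp; fin_cases hp <;> assumption) _ (by decide)
  have e61 : h (6, 1) = (6, 1) := forced h [((1, 1), 1), ((3, 1), 1)] (by intro p hp; fin_cases hp <;> assumption) _ (by decide)

  intro v
  have hv := mem_allV v
  fin_cases hv <;> assumption

lemma classify (T : MK ≃g MK) : ∃ p ∈ tbls, ∀ v, T v = fn p.1 v := by
  have key : ∀ a b c : MKV, mkRel a b = true → mkRel a c = true → b ≠ c →
      ∃ p ∈ tbls, fn p.1 (0, 0) = a ∧ fn p.1 (1, 0) = b ∧ fn p.1 (0, 1) = c := by decide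
  have h1 : mkRel (T (0, 0)) (T (1, 0)) = true := by
    rw [mkRel_map]; decide
  have h2 : mkRel (T (0, 0)) (T (0, 1)) = true := by
    rw [mkRel_map]; decide
  have h3 : T (1, 0) ≠ T (0, 1) := fun hc => by
    have := T.injective hc
    simp at this
  obtain ⟨p, hp, f1, f2, f3⟩ := key _ _ _ h1 h2 h3
  refine ⟨p, hp, ?_⟩
  set g := mkAuto p (tbls_autoP p hp) with hg
  have hr : ∀ v, (g.trans T.symm) v = v := by
    apply rigid
    · show T.symm (fn p.1 (0, 0)) = (0, 0)
      rw [f1]; exact T.symm_apply_apply _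
    · show T.symm (fn p.1 (1, 0)) = (1, 0)
      rw [f2]; exact T.symm_apply_apply _
    · show T.symm (fn p.1 (0, 1)) = (0, 1)
      rw [f3]; exact T.symm_apply_apply _
  intro v
  have h4 : T.symm (fn p.1 v) = v := hr v
  have := congrArg T h4
  rw [T.apply_symm_apply] at this
  exact this.symm

noncomputable def lefInt (f : MKV → MKV) : ℤ :=
  ((Finset.univ.filter fun v : ZMod 8 × Fin 2 => f v = v).card : ℤ)
    - ((MK.edgeFinset.filter fun e => ∀ v ∈ e, f v = v).card : ℤ)
    + ((MK.edgeFinset.filter fun e => Sym2.map f e = e ∧ ¬ ∀ v ∈ e, f v = v).card : ℤ)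

lemma lefschetz_eq (T : MK ≃g MK) : lefschetz T = lefInt (fun v => T v) := rfl

def ordChk2 (f : MKV → MKV) : Prop := (∀ v, f (f v) = v) ∧ ¬ (∀ v, f v = v)
def ordChk3 (f : MKV → MKV) : Prop := (∀ v, f (f (f v)) = v) ∧ ¬ (∀ v, f v = v)
def ffChk (f : MKV → MKV) : Prop :=
  (∀ v, f v ≠ v) ∧ ∀ v w : MKV, mkRel v w = true → ¬ (f v = w ∧ f w = v)

instance (f : MKV → MKV) : Decidable (ordChk2 f) := by unfold ordChk2; infer_instance
instance (f : MKV → MKV) : Decidable (ordChk3 f) := by unfold ordChk3; infer_instance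
instance (f : MKV → MKV) : Decidable (ffChk f) := by unfold ffChk; infer_instance

lemma main_dec : ∀ p ∈ tbls,
    (lefInt (fn p.1) = 4 → ordChk2 (fn p.1) ∨ ordChk3 (fn p.1)) ∧
    (lefInt (fn p.1) = 2 → ordChk2 (fn p.1)) ∧
    (lefInt (fn p.1) = 0 → ffChk (fn p.1)) := by decide

lemma orderOf_eq_two (g : MK ≃g MK) (h2 : ∀ v, g (g v) = v) (hne : ¬ ∀ v, g v = v) :
    orderOf g = 2 := by
  have : Fact (Nat.Prime 2) := ⟨Nat.prime_two⟩
  refine orderOf_eq_prime ?_ (fun hg => hne fun v => by rw [hg]; rfl)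
  refine iso_ext fun v => ?_
  rw [pow_two]
  exact h2 v

lemma orderOf_eq_three (g : MK ≃g MK) (h3 : ∀ v, g (g (g v)) = v) (hne : ¬ ∀ v, g v = v) :
    orderOf g = 3 := by
  have : Fact (Nat.Prime 3) := ⟨Nat.prime_three⟩
  refine orderOf_eq_prime ?_ (fun hg => hne fun v => by rw [hg]; rfl)
  refine iso_ext fun v => ?_
  rw [pow_succ, pow_two]
  exact h3 v

/-- Automorphisms of `MK` with Lefschetz number 4 have order 2 or 3, those with
Lefschetz number 2 have order 2, and those with Lefschetz number 0 fix no vertex and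
map no edge to itself. -/

theorem lefschetz_order_moebiusKantor (T : MK ≃g MK) :
    (lefschetz T = 4 → orderOf T = 2 ∨ orderOf T = 3) ∧
    (lefschetz T = 2 → orderOf T = 2) ∧
    (lefschetz T = 0 → (∀ v, T v ≠ v) ∧ ∀ e ∈ MK.edgeSet, Sym2.map T e ≠ e) := by
  obtain ⟨p, hp, hfun⟩ := classify T
  have hfe : (fun v => T v) = fn p.1 := funext hfun
  have hL : lefschetz T = lefInt (fn p.1) := by rw [lefschetz_eq, hfe]
  obtain ⟨m1, m2, m3⟩ := main_dec p hp
  refine ⟨?_, ?_, ?_⟩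
  · intro h4
    rw [hL] at h4
    rcases m1 h4 with ⟨hsq, hne⟩ | ⟨hcb, hne⟩
    · exact Or.inl (orderOf_eq_two T (fun v => by rw [hfun, hfun]; exact hsq v)
        (fun hall => hne fun v => by rw [← hfun]; exact hall v))
    · exact Or.inr (orderOf_eq_three T (fun v => by rw [hfun, hfun, hfun]; exact hcb v)
        (fun hall => hne fun v => by rw [← hfun]; exact hall v))
  · intro h2
    rw [hL] at h2
    obtain ⟨hsq, hne⟩ := m2 h2
    exact orderOf_eq_two T (fun v => by rw [hfun, hfun]; exact hsq v)
      (fun hall => hne fun v => by rw [← hfun]; exact hall v)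
  · intro h0
    rw [hL] at h0
    obtain ⟨hff, hedge⟩ := m3 h0
    refine ⟨fun v hv => hff v (by rw [← hfun]; exact hv), ?_⟩
    intro e he
    induction e using Sym2.ind with
    | _ v w =>
      intro hmap
      rw [Sym2.map_pair_eq, Sym2.eq_iff] at hmap
      have hadj : mkRel v w = true := he
      rcases hmap with ⟨hv, hw⟩ | ⟨hv, hw⟩
      · exact hff v (by rw [← hfun]; exact hv)
      · exact hedge v w hadj ⟨by rw [← hfun]; exact hv, by rw [← hfun]; exact hw⟩
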